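/- Let J be a non-trivial ideal of ℝ[x₁,…,xₙ] and let G ⊆ J be a reduced Gröbner basis of J with respect to a monomial order ≼ such that every element of G is a binomial (this holds automatically when J is a binomial ideal, by Eisenbud–Sturmfels). Then J ∩ ℝ≥0[x] = {0} if and only if G ∩ ℝ≥0[x] = ∅. -/

import Mathlib

open MvPolynomial

/-- A monomial order on exponent vectors in `ℕⁿ`: a linear order on `Fin n →₀ ℕ`
compatible with addition and having `0` as least element. -/
structure MonOrd (n : ℕ) where
  le : (Fin n →₀ ℕ) → (Fin n →₀ ℕ) → Prop
  le_refl : ∀ a, le a a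
  le_trans : ∀ a b c, le a b → le b c → le a c
  le_antisymm : ∀ a b, le a b → le b a → a = b
  le_total : ∀ a b, le a b ∨ le b a
  add_le_add_right : ∀ a b, le a b → ∀ c, le (a + c) (b + c)
  zero_le : ∀ a, le 0 a

/-- `α` is the exponent vector of the `m`-leading monomial of `f`. -/
def IsLeadMon {n : ℕ} (m : MonOrd n) (f : MvPolynomial (Fin n) ℝ) (α : Fin n →₀ ℕ) : Prop :=
  α ∈ f.support ∧ ∀ β ∈ f.support, m.le β α

/-- `G` is a Gröbner basis of `J` with respect to the monomial order `m`:
a finite set of nonzero polynomials of `J` such that for every nonzero `f ∈ J`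
the leading monomial of some `g ∈ G` divides the leading monomial of `f`
(divisibility of monomials being the pointwise order on exponent vectors). -/
def IsGroebnerBasis {n : ℕ} (m : MonOrd n) (G : Finset (MvPolynomial (Fin n) ℝ))
    (J : Ideal (MvPolynomial (Fin n) ℝ)) : Prop :=
  (G : Set (MvPolynomial (Fin n) ℝ)) ⊆ (J : Set (MvPolynomial (Fin n) ℝ)) ∧
    (∀ g ∈ G, g ≠ 0) ∧
    ∀ f ∈ J, f ≠ 0 → ∃ g ∈ G, ∃ α β, IsLeadMon m f α ∧ IsLeadMon m g β ∧ β ≤ α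

/-- A reduced Gröbner basis: every element has leading coefficient `1`, and no monomial
occurring in any `g ∈ G` is divisible by the leading monomial of another element of `G`. -/
def IsReducedGroebnerBasis {n : ℕ} (m : MonOrd n) (G : Finset (MvPolynomial (Fin n) ℝ))
    (J : Ideal (MvPolynomial (Fin n) ℝ)) : Prop :=
  IsGroebnerBasis m G J ∧
    (∀ g ∈ G, ∀ β, IsLeadMon m g β → coeff β g = 1) ∧
    ∀ g ∈ G, ∀ g' ∈ G, g ≠ g' → ∀ α ∈ g.support, ∀ β, IsLeadMon m g' β → ¬ β ≤ α

/-- All coefficients of `f` are nonnegative, i.e. `f ∈ ℝ≥0[x]`. -/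
def NonnegCoeffs {n : ℕ} (f : MvPolynomial (Fin n) ℝ) : Prop := ∀ α, 0 ≤ coeff α f

/-- Let `J` be a non-trivial ideal of `ℝ[x₁,…,xₙ]` and `G ⊆ J` a reduced Gröbner basis of `J`
consisting of binomials. Then `J ∩ ℝ≥0[x] = {0}` iff `G ∩ ℝ≥0[x] = ∅`. -/
-- pointwise le implies m.le
lemma mle_of_le {n : ℕ} (m : MonOrd n) {a b : Fin n →₀ ℕ} (h : a ≤ b) : m.le a b := by
  obtain ⟨c, rfl⟩ := le_iff_exists_add.mp h
  have := m.add_le_add_right 0 c (m.zero_le c) a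
  simpa [add_comm] using this

-- well-foundedness of the strict order
lemma mwf {n : ℕ} (m : MonOrd n) :
    WellFounded (fun a b : Fin n →₀ ℕ => m.le a b ∧ a ≠ b) := by
  haveI : IsStrictOrder (Fin n →₀ ℕ) (fun a b => m.le a b ∧ a ≠ b) :=
    { irrefl := fun a h => h.2 rfl
      trans := fun a b c hab hbc => ⟨m.le_trans _ _ _ hab.1 hbc.1, fun h => by
        subst h
        exact hbc.2 (m.le_antisymm _ _ hbc.1 hab.1)⟩ }
  rw [RelEmbedding.wellFounded_iff_isEmpty]
  constructor
  intro f
  obtain ⟨i, j, hij, hle⟩ := (Set.isPWO_of_wellQuasiOrderedLE (Set.univ : Set (Fin n →₀ ℕ))).exists_lt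
    (f := fun k => f k) (fun _ => Set.mem_univ _)
  have h1 : m.le (f i) (f j) := mle_of_le m hle
  have h2 : m.le (f j) (f i) ∧ f j ≠ f i := f.map_rel_iff.mpr hij
  exact h2.2 (m.le_antisymm _ _ h2.1 h1)

-- existence of a maximum of a nonempty finset
lemma finset_mmax {n : ℕ} (m : MonOrd n) (s : Finset (Fin n →₀ ℕ)) (hs : s.Nonempty) :
    ∃ α ∈ s, ∀ β ∈ s, m.le β α := by
  classical
  revert hs
  refine Finset.induction_on s (by simp) ?_
  intro a t hx ih _
  rcases t.eq_empty_or_nonempty with rfl | ht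
  · exact ⟨a, by simp, by simpa using m.le_refl a⟩
  · obtain ⟨α, hα, hmax⟩ := ih ht
    rcases m.le_total a α with h | h
    · exact ⟨α, Finset.mem_insert_of_mem hα, by
        intro β hβ
        rcases Finset.mem_insert.mp hβ with rfl | hβ
        · exact h
        · exact hmax β hβ⟩
    · exact ⟨a, Finset.mem_insert_self a t, by
        intro β hβ
        rcases Finset.mem_insert.mp hβ with rfl | hβ
        · exact m.le_refl β
        · exact m.le_trans _ _ _ (hmax β hβ) h⟩

-- existence of lead monomial
lemma exists_lead {n : ℕ} (m : MonOrd n) {f : MvPolynomial (Fin n) ℝ} (hf : f ≠ 0) :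
    ∃ α, IsLeadMon m f α := by
  have hne : f.support.Nonempty := by
    rw [Finset.nonempty_iff_ne_empty]
    simpa [MvPolynomial.support_eq_empty] using hf
  obtain ⟨α, hα, hmax⟩ := finset_mmax m f.support hne
  exact ⟨α, hα, hmax⟩

lemma lead_unique {n : ℕ} (m : MonOrd n) {f : MvPolynomial (Fin n) ℝ} {α α' : Fin n →₀ ℕ}
    (h : IsLeadMon m f α) (h' : IsLeadMon m f α') : α = α' :=
  m.le_antisymm _ _ (h'.2 α h.1) (h.2 α' h'.1)


lemma key {n : ℕ} (m : MonOrd n) {J : Ideal (MvPolynomial (Fin n) ℝ)}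
    {G : Finset (MvPolynomial (Fin n) ℝ)} (hG : IsReducedGroebnerBasis m G J)
    (hbin : ∀ g ∈ G, g.support.card = 2)
    (hneg : ∀ g ∈ G, ¬ NonnegCoeffs g) :
    ∀ f ∈ J, NonnegCoeffs f → f = 0 := by
  classical
  obtain ⟨⟨hGJ, hGne, hdiv⟩, hlc, _⟩ := hG
  suffices H : ∀ α : Fin n →₀ ℕ, ∀ f, f ∈ J → f ≠ 0 → NonnegCoeffs f → IsLeadMon m f α → False by
    intro f hfJ hnn
    by_contra hf0
    obtain ⟨α, hα⟩ := exists_lead m hf0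
    exact H α f hfJ hf0 hnn hα
  intro α
  induction α using (mwf m).induction with
  | _ α ih =>
  intro f hfJ hf0 hnn hlead
  obtain ⟨g, hgG, α', β, hfl, hgl, hble⟩ := hdiv f hfJ hf0
  have hαα' : α = α' := lead_unique m hlead hfl
  subst hαα'
  -- g is a binomial with leading coefficient 1 and a negative coefficient c
  obtain ⟨γ, hγ⟩ := Finset.card_eq_one.mp
    (by rw [Finset.card_erase_of_mem hgl.1, hbin g hgG])
  have hγmem : γ ∈ g.support.erase β := hγ ▸ Finset.mem_singleton_self γ
  have hγβ : γ ≠ β := (Finset.mem_erase.mp hγmem).1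
  have hγsupp : γ ∈ g.support := (Finset.mem_erase.mp hγmem).2
  have hsupp : g.support = insert β {γ} := by
    rw [← Finset.insert_erase hgl.1, hγ]
  have hcβ : coeff β g = 1 := hlc g hgG β hgl
  set c := coeff γ g with hcdef
  have hc : c < 0 := by
    have := hneg g hgG
    unfold NonnegCoeffs at this
    push_neg at this
    obtain ⟨δ, hδ⟩ := this
    have hδs : δ ∈ g.support := mem_support_iff.mpr (by linarith)
    rw [hsupp] at hδs
    rcases Finset.mem_insert.mp hδs with rfl | hδs
    · rw [hcβ] at hδ; linarith
    · rw [Finset.mem_singleton] at hδs; subst hδs; exact hδ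
  have hgeq : g = monomial β 1 + monomial γ c := by
    conv_lhs => rw [as_sum g, hsupp]
    rw [Finset.sum_insert (by simp [Ne.symm hγβ]), Finset.sum_singleton, hcβ]
  set a := coeff α f with hadef
  have ha : 0 < a :=
    lt_of_le_of_ne (hnn α) (Ne.symm (mem_support_iff.mp hlead.1))
  set d := α - β with hddef
  have hd : d + β = α := by
    rw [hddef, add_comm]; exact add_tsub_cancel_of_le hble
  set γ' := d + γ with hγ'def
  have hγ'α : γ' ≠ α := by
    intro h
    rw [hγ'def, ← hd] at h
    exact hγβ (add_left_cancel h)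
  set f' := f - monomial d a * g with hf'def
  have hf'J : f' ∈ J := J.sub_mem hfJ (J.mul_mem_left _ (hGJ hgG))
  have hmul : monomial d a * g = monomial α a + monomial γ' (a * c) := by
    rw [hgeq, mul_add, monomial_mul, monomial_mul, hd, mul_one]
  have hcoeff : ∀ δ, coeff δ f' =
      coeff δ f - (if α = δ then a else 0) - (if γ' = δ then a * c else 0) := by
    intro δ
    rw [hf'def, hmul, coeff_sub, coeff_add, coeff_monomial, coeff_monomial]
    ring
  have hac : a * c < 0 := mul_neg_of_pos_of_neg ha hc
  have hnn' : NonnegCoeffs f' := by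
    intro δ
    rw [hcoeff δ]
    by_cases h1 : α = δ
    · subst h1
      rw [if_pos rfl, if_neg hγ'α]
      simp [← hadef]
    · rw [if_neg h1]
      by_cases h2 : γ' = δ
      · rw [if_pos h2]
        have := hnn δ
        linarith
      · rw [if_neg h2]
        simpa using hnn δ
  by_cases hf'0 : f' = 0
  · have h0 := hcoeff γ'
    rw [hf'0, coeff_zero, if_neg (fun h => hγ'α h.symm), if_pos rfl] at h0
    have := hnn γ'
    have : coeff γ' f = a * c := by linarith
    linarith [hnn γ']
  · obtain ⟨α'', hl''⟩ := exists_lead m hf'0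
    have hmem'' : coeff α'' f' ≠ 0 := mem_support_iff.mp hl''.1
    have hne'' : α'' ≠ α := by
      intro h; subst h
      rw [hcoeff α'', if_pos rfl, if_neg hγ'α] at hmem''
      simp [← hadef] at hmem''
    have hle'' : m.le α'' α := by
      by_cases hγ'' : α'' = γ'
      · subst hγ''
        have hγle : m.le γ β := hgl.2 γ hγsupp
        have := m.add_le_add_right γ β hγle d
        rw [add_comm γ d, add_comm β d, hd] at this
        exact this
      · have : coeff α'' f ≠ 0 := by
          rw [hcoeff α'', if_neg (fun h => hne'' h.symm), if_neg (fun h => hγ'' h.symm)] at hmem''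
          simpa using hmem''
        exact hlead.2 α'' (mem_support_iff.mpr this)
    exact ih α'' ⟨hle'', hne''⟩ f' hf'J hf'0 hnn' hl''

theorem statement0 (n : ℕ) (m : MonOrd n) (J : Ideal (MvPolynomial (Fin n) ℝ)) (hJ : J ≠ ⊥)
    (G : Finset (MvPolynomial (Fin n) ℝ)) (hG : IsReducedGroebnerBasis m G J)
    (hbin : ∀ g ∈ G, g.support.card = 2) :
    (J : Set (MvPolynomial (Fin n) ℝ)) ∩ {f | NonnegCoeffs f} = {0} ↔
      (G : Set (MvPolynomial (Fin n) ℝ)) ∩ {f | NonnegCoeffs f} = ∅ := by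
  constructor
  · intro h
    rw [Set.eq_empty_iff_forall_notMem]
    rintro g ⟨hgG, hgnn⟩
    have hg0 : g = 0 := by
      have : g ∈ ({0} : Set (MvPolynomial (Fin n) ℝ)) := h ▸ ⟨hG.1.1 hgG, hgnn⟩
      simpa using this
    exact hG.1.2.1 g hgG hg0
  · intro h
    ext f
    constructor
    · rintro ⟨hfJ, hfnn⟩
      have hneg : ∀ g ∈ G, ¬ NonnegCoeffs g := by
        intro g hgG hgnn
        have : g ∈ (G : Set (MvPolynomial (Fin n) ℝ)) ∩ {f | NonnegCoeffs f} := ⟨hgG, hgnn⟩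
        rw [h] at this
        exact this
      exact key m hG hbin hneg f hfJ hfnn
    · intro hf
      rw [Set.mem_singleton_iff] at hf
      subst hf
      exact ⟨J.zero_mem, fun α => by simp⟩
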